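/- Let P be a set of primes and H₁, H₂ finite sets of non-negative integers. Suppose the limits κ_P^{H₁} and κ_P^{H₂} both exist and |κ_P^{H₁}| = |κ_P^{H₂}| = 1. Then κ_P^{H₁ △ H₂} exists and κ_P^{H₁ △ H₂} = κ_P^{H₁} · κ_P^{H₂}. -/
import Mathlib


open Filter Topology
open scoped symmDiff Classical

/-- `Ω_P(n)`: number of prime factors of `n` (with multiplicity) lying in `P`. -/
noncomputable def OmegaP (P : Set ℕ) (n : ℕ) : ℕ :=
  n.factorization.sum fun p k => if p ∈ P then k else 0

/-- `λ_P`, the completely multiplicative function equal to `-1` at primes in `P`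
and `1` at all other primes. -/
noncomputable def lambdaP (P : Set ℕ) (n : ℕ) : ℝ :=
  (-1 : ℝ) ^ OmegaP P n

/-- `Λ_P^H(n) = ∏_{h ∈ H} λ_P(n + h)` (empty product is `1`). -/
noncomputable def LambdaPH (P : Set ℕ) (H : Finset ℕ) (n : ℕ) : ℝ :=
  ∏ h ∈ H, lambdaP P (n + h)

/-- `N_P^H = {n : Λ_P^H(n) = -1}`. -/
def NPH (P : Set ℕ) (H : Finset ℕ) : Set ℕ :=
  {n : ℕ | LambdaPH P H n = -1}

/-- Number of elements of `A` in `[1, x]`. -/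
noncomputable def countIn (A : Set ℕ) (x : ℕ) : ℕ :=
  ((Finset.Icc 1 x).filter (fun n => n ∈ A)).card

/-- `A ⊆ ℕ` has natural density `d`: `|A ∩ [1,x]|/x → d`. -/
def HasDensity (A : Set ℕ) (d : ℝ) : Prop :=
  Filter.Tendsto (fun x : ℕ => (countIn A x : ℝ) / x) Filter.atTop (nhds d)

/-- The Cesàro average `(1/x) ∑_{n ≤ x} Λ_P^H(n)`. -/
noncomputable def cesaroAvg (P : Set ℕ) (H : Finset ℕ) (x : ℕ) : ℝ :=
  (∑ n ∈ Finset.Icc 1 x, LambdaPH P H n) / x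

/-- A set of naturals is small if the sum of reciprocals of its elements converges. -/
def SmallSet (P : Set ℕ) : Prop :=
  Summable fun p : P => (1 : ℝ) / (p : ℝ)

/-- `C(r,s) = {n : n ≡ -r (mod s)}`. -/
def Cset (r s : ℕ) : Set ℕ :=
  {n : ℕ | (n : ℤ) ≡ -(r : ℤ) [ZMOD (s : ℤ)]}

/-- The set of `P`-smooth positive integers. -/
def SmoothP (P : Set ℕ) : Set ℕ :=
  {n : ℕ | 0 < n ∧ ∀ p : ℕ, p.Prime → p ∣ n → p ∈ P}

/-- `𝒜_P`: all finite unions of sets from `{∅} ∪ {C(r,n) : r ∈ ℕ, n ∈ S_P}`. -/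
def calA (P : Set ℕ) : Set (Set ℕ) :=
  {A : Set ℕ | ∃ F : Finset (ℕ × ℕ), (∀ q ∈ F, q.2 ∈ SmoothP P) ∧
    A = ⋃ q ∈ F, Cset q.1 q.2}

lemma abs_lambdaP (P : Set ℕ) (n : ℕ) : |lambdaP P n| = 1 := by
  simp [lambdaP, abs_pow]

lemma lambdaP_mul_self (P : Set ℕ) (n : ℕ) : lambdaP P n * lambdaP P n = 1 := by
  rcases (abs_eq (by norm_num)).mp (abs_lambdaP P n) with h | h <;> rw [h] <;> norm_num

lemma abs_LambdaPH (P : Set ℕ) (H : Finset ℕ) (n : ℕ) : |LambdaPH P H n| = 1 := by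
  rw [LambdaPH, Finset.abs_prod]
  exact Finset.prod_eq_one fun h _ => abs_lambdaP P (n + h)

lemma LambdaPH_symmDiff (P : Set ℕ) (H₁ H₂ : Finset ℕ) (n : ℕ) :
    LambdaPH P (H₁ ∆ H₂) n = LambdaPH P H₁ n * LambdaPH P H₂ n := by
  unfold LambdaPH
  rw [← Finset.prod_union_inter]
  have hsub : H₁ ∩ H₂ ⊆ H₁ ∪ H₂ :=
    Finset.Subset.trans Finset.inter_subset_left Finset.subset_union_left
  have hsd : H₁ ∆ H₂ = (H₁ ∪ H₂) \ (H₁ ∩ H₂) := by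
    ext a
    simp only [Finset.mem_symmDiff, Finset.mem_sdiff, Finset.mem_union, Finset.mem_inter]
    tauto
  rw [← Finset.prod_sdiff hsub, ← hsd, mul_assoc, ← Finset.prod_mul_distrib]
  rw [Finset.prod_congr rfl (fun h _ => lambdaP_mul_self P (n + h)), Finset.prod_const_one,
    mul_one]

lemma abs_sub_of_abs_one {a b : ℝ} (ha : |a| = 1) (hb : |b| = 1) :
    |a - b| = 1 - a * b := by
  rcases (abs_eq (by norm_num)).mp ha with h | h <;>
    rcases (abs_eq (by norm_num)).mp hb with h' | h' <;>
      subst h <;> subst h' <;> norm_num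

/-- If `κ_P^{H₁}` and `κ_P^{H₂}` exist with `|κ_P^{H₁}| = |κ_P^{H₂}| = 1`,
then `κ_P^{H₁ ∆ H₂}` exists and equals `κ_P^{H₁} · κ_P^{H₂}`. -/
theorem stmt_16 (P : Set ℕ) (hP : ∀ q ∈ P, Nat.Prime q) (H₁ H₂ : Finset ℕ)
    (κ₁ κ₂ : ℝ)
    (h₁ : Filter.Tendsto (cesaroAvg P H₁) Filter.atTop (nhds κ₁))
    (h₂ : Filter.Tendsto (cesaroAvg P H₂) Filter.atTop (nhds κ₂))
    (ha₁ : |κ₁| = 1) (ha₂ : |κ₂| = 1) :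
    Filter.Tendsto (cesaroAvg P (H₁ ∆ H₂)) Filter.atTop (nhds (κ₁ * κ₂)) := by
  have hκsq : κ₂ * κ₂ = 1 := by
    have := sq_abs κ₂
    rw [ha₂] at this
    nlinarith [this]
  have key : ∀ x : ℕ, 1 ≤ x →
      |cesaroAvg P (H₁ ∆ H₂) x - κ₂ * cesaroAvg P H₁ x| ≤ 1 - κ₂ * cesaroAvg P H₂ x := by
    intro x hx
    have hx0 : (0:ℝ) < x := by exact_mod_cast hx
    unfold cesaroAvg
    rw [← mul_div_assoc, div_sub_div_same, Finset.mul_sum, ← Finset.sum_sub_distrib]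
    rw [abs_div, abs_of_pos hx0]
    have hsum : ∀ n ∈ Finset.Icc 1 x,
        |LambdaPH P (H₁ ∆ H₂) n - κ₂ * LambdaPH P H₁ n| = 1 - κ₂ * LambdaPH P H₂ n := by
      intro n _
      have : LambdaPH P (H₁ ∆ H₂) n - κ₂ * LambdaPH P H₁ n
          = LambdaPH P H₁ n * (LambdaPH P H₂ n - κ₂) := by
        rw [LambdaPH_symmDiff]; ring
      rw [this, abs_mul, abs_LambdaPH, one_mul,
        abs_sub_of_abs_one (abs_LambdaPH P H₂ n) ha₂]
      ring
    calc |∑ n ∈ Finset.Icc 1 x, (LambdaPH P (H₁ ∆ H₂) n - κ₂ * LambdaPH P H₁ n)| / x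
        ≤ (∑ n ∈ Finset.Icc 1 x, |LambdaPH P (H₁ ∆ H₂) n - κ₂ * LambdaPH P H₁ n|) / x :=
          div_le_div_of_nonneg_right (Finset.abs_sum_le_sum_abs _ _) hx0.le
      _ = (∑ n ∈ Finset.Icc 1 x, (1 - κ₂ * LambdaPH P H₂ n)) / x := by
          rw [Finset.sum_congr rfl hsum]
      _ = 1 - κ₂ * ((∑ n ∈ Finset.Icc 1 x, LambdaPH P H₂ n) / x) := by
          rw [Finset.sum_sub_distrib, Finset.sum_const, ← Finset.mul_sum,
            Nat.card_Icc, nsmul_eq_mul, mul_one]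
          push_cast
          field_simp
  have h0 : Filter.Tendsto (fun x => cesaroAvg P (H₁ ∆ H₂) x - κ₂ * cesaroAvg P H₁ x)
      Filter.atTop (nhds 0) := by
    have hg : Filter.Tendsto (fun x => 1 - κ₂ * cesaroAvg P H₂ x) Filter.atTop (nhds 0) := by
      have := (tendsto_const_nhds (x := (1:ℝ))).sub (h₂.const_mul κ₂)
      simpa [hκsq] using this
    apply squeeze_zero_norm' _ hg
    filter_upwards [eventually_ge_atTop 1] with x hx
    simpa [Real.norm_eq_abs] using key x hx
  have hfin := h0.add (h₁.const_mul κ₂)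
  simp only [zero_add] at hfin
  have heq : (fun x => (cesaroAvg P (H₁ ∆ H₂) x - κ₂ * cesaroAvg P H₁ x)
      + κ₂ * cesaroAvg P H₁ x) = cesaroAvg P (H₁ ∆ H₂) := by
    funext x; ring
  rw [heq, mul_comm] at hfin
  exact hfin
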